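/- arXiv:2105.04923 — 3 statements merged into one kernel-verified Lean document; each statement's English description precedes it below -/
import Mathlib

section
/- For the complete graph K_N with coupling γ > 0, the solution x(t) = exp(γ t A) x₀ satisfies x(t) = e^{-γ t}·x₀ + ((e^{γ(N-1)t} − e^{-γ t})/N)·(Σ_j x₀_j)·𝟙, and if Σ_j x₀_j ≠ 0 then for every pair i, j, the ratio x_i(t)/x_j(t) → 1 as t → ∞ (full synchronization). -/
open NormedSpace

theorem exp_mulVec_eigen {N : ℕ} (M : Matrix (Fin N) (Fin N) ℂ) (v : Fin N → ℂ) (μ : ℂ)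
    (h : M.mulVec v = μ • v) :
    (NormedSpace.exp M).mulVec v = Complex.exp μ • v := by
  letI : SeminormedRing (Matrix (Fin N) (Fin N) ℂ) := Matrix.linftyOpSemiNormedRing
  letI : NormedRing (Matrix (Fin N) (Fin N) ℂ) := Matrix.linftyOpNormedRing
  letI : NormedAlgebra ℂ (Matrix (Fin N) (Fin N) ℂ) := Matrix.linftyOpNormedAlgebra
  have hpow : ∀ n : ℕ, (M ^ n).mulVec v = μ ^ n • v := by
    intro n
    induction n with
    | zero => simp [Matrix.one_mulVec]
    | succ n ih =>
      rw [pow_succ, ← Matrix.mulVec_mulVec, h, Matrix.mulVec_smul, ih, pow_succ]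
      rw [smul_smul, mul_comm]
  have hs : Summable (fun n : ℕ => ((n.factorial : ℂ))⁻¹ • M ^ n) :=
    NormedSpace.expSeries_summable' M
  let L : Matrix (Fin N) (Fin N) ℂ →ₗ[ℂ] (Fin N → ℂ) :=
    { toFun := fun B => B.mulVec v
      map_add' := fun B C => Matrix.add_mulVec B C v
      map_smul' := fun c B => Matrix.smul_mulVec c B v }
  let Lc : Matrix (Fin N) (Fin N) ℂ →L[ℂ] (Fin N → ℂ) :=
    ⟨L, LinearMap.continuous_of_finiteDimensional L⟩
  have hmap : (NormedSpace.exp M).mulVec v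
      = ∑' n : ℕ, (((n.factorial : ℂ))⁻¹ • M ^ n).mulVec v := by
    rw [NormedSpace.exp_eq_tsum (𝕂 := ℂ)]
    exact Lc.map_tsum hs
  rw [hmap]
  have : ∀ n : ℕ, (((n.factorial : ℂ))⁻¹ • M ^ n).mulVec v
      = (((n.factorial : ℂ))⁻¹ * μ ^ n) • v := by
    intro n
    rw [Matrix.smul_mulVec, hpow, smul_smul]
  simp_rw [this]
  rw [Summable.tsum_smul_const]
  · congr 1
    rw [Complex.exp_eq_exp_ℂ, NormedSpace.exp_eq_tsum (𝕂 := ℂ)]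
    simp [smul_eq_mul]
  · simpa [smul_eq_mul] using NormedSpace.expSeries_summable' (𝕂 := ℂ) μ

theorem stmt_11 (N : ℕ) (hN : 2 ≤ N) (A : Matrix (Fin N) (Fin N) ℂ)
    (hA : ∀ i j : Fin N, A i j = if i = j then 0 else 1)
    (γ : ℝ) (hγ : 0 < γ) (x₀ : Fin N → ℂ)
    (x : ℝ → Fin N → ℂ)
    (hx : ∀ t : ℝ, x t = (NormedSpace.exp (((γ : ℂ) * t) • A)).mulVec x₀) :
    (∀ t : ℝ, x t =
      Complex.exp (-((γ : ℂ) * t)) • x₀ +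
        (((Complex.exp ((γ : ℂ) * ((N : ℂ) - 1) * t) - Complex.exp (-((γ : ℂ) * t))) / N) *
            ∑ j, x₀ j) • (fun _ => (1 : ℂ))) ∧
    ((∑ j, x₀ j) ≠ 0 → ∀ i j : Fin N,
      Filter.Tendsto (fun t : ℝ => x t i / x t j) Filter.atTop (nhds 1)) := by
  have hN0 : (N : ℂ) ≠ 0 := Nat.cast_ne_zero.mpr (by omega)
  set S : ℂ := ∑ j, x₀ j with hS
  -- mulVec formula for A
  have hAmul : ∀ w : Fin N → ℂ, A.mulVec w = fun i => (∑ j, w j) - w i := by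
    intro w; funext i
    have h1 : ∀ j, A i j * w j = w j - (if i = j then w j else 0) := by
      intro j; rw [hA]; split <;> ring
    simp only [Matrix.mulVec, dotProduct]
    rw [Finset.sum_congr rfl (fun j _ => h1 j), Finset.sum_sub_distrib,
      Finset.sum_ite_eq Finset.univ i (fun j => w j)]
    simp
  -- eigenvectors
  set one : Fin N → ℂ := fun _ => (1 : ℂ) with hone
  set y : Fin N → ℂ := fun i => x₀ i - S / N with hy
  have hsum_one : (∑ _j : Fin N, (1 : ℂ)) = (N : ℂ) := by simp
  have hsum_y : (∑ j, y j) = 0 := by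
    simp only [hy, Finset.sum_sub_distrib, Finset.sum_const, Finset.card_univ, Fintype.card_fin,
      nsmul_eq_mul]
    field_simp
    simp [hS]
  have heig1 : A.mulVec one = ((N : ℂ) - 1) • one := by
    rw [hAmul]; funext i; simp [hone, hsum_one]
  have heig2 : A.mulVec y = (-1 : ℂ) • y := by
    rw [hAmul]; funext i; simp [hsum_y]
  have hdecomp : x₀ = y + (S / N) • one := by
    funext i; simp [hy, hone]
  have key : ∀ t : ℝ, x t =
      Complex.exp (-((γ : ℂ) * t)) • x₀ +
        (((Complex.exp ((γ : ℂ) * ((N : ℂ) - 1) * t) - Complex.exp (-((γ : ℂ) * t))) / N) *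
            S) • one := by
    intro t
    set c : ℂ := (γ : ℂ) * t with hc
    have e1 : (c • A).mulVec one = (c * ((N : ℂ) - 1)) • one := by
      rw [Matrix.smul_mulVec, heig1, smul_smul]
    have e2 : (c • A).mulVec y = (-c) • y := by
      rw [Matrix.smul_mulVec, heig2, smul_smul]
      ring_nf
    have E1 := exp_mulVec_eigen (c • A) one _ e1
    have E2 := exp_mulVec_eigen (c • A) y _ e2
    rw [hx t, hdecomp, Matrix.mulVec_add, Matrix.mulVec_smul, E1, E2]
    have harg : (γ : ℂ) * ((N : ℂ) - 1) * t = c * ((N : ℂ) - 1) := by rw [hc]; ring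
    rw [harg]
    funext i
    simp only [Pi.add_apply, Pi.smul_apply, hone, hy, smul_eq_mul, mul_one]
    field_simp
    ring
  refine ⟨key, ?_⟩
  intro hSne i j
  -- auxiliary function
  set E : ℝ → ℂ := fun t => Complex.exp (-((γ : ℂ) * (N : ℂ) * t)) with hE
  set h : ℝ → Fin N → ℂ := fun t i => E t * x₀ i + (1 - E t) / N * S with hh
  have hfact : ∀ t k, x t k = Complex.exp ((γ : ℂ) * ((N : ℂ) - 1) * t) * h t k := by
    intro t k
    rw [key t]
    simp only [hh, hE, Pi.add_apply, Pi.smul_apply, hone, smul_eq_mul, mul_one]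
    rw [show -((γ : ℂ) * t) = (γ : ℂ) * ((N : ℂ) - 1) * t + -((γ : ℂ) * (N : ℂ) * t) by ring,
      Complex.exp_add]
    field_simp
  have hE0 : Filter.Tendsto E Filter.atTop (nhds 0) := by
    rw [tendsto_zero_iff_norm_tendsto_zero]
    have hnorm : ∀ t : ℝ, ‖E t‖ = Real.exp (-(γ * N * t)) := by
      intro t
      rw [hE]
      rw [Complex.norm_exp]
      norm_num
    simp_rw [hnorm]
    apply Real.tendsto_exp_atBot.comp
    apply Filter.tendsto_neg_atBot_iff.mpr
    apply Filter.Tendsto.const_mul_atTop (by positivity : (0:ℝ) < γ * N) Filter.tendsto_id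
  have hlim : ∀ k : Fin N, Filter.Tendsto (fun t => h t k) Filter.atTop (nhds (S / N)) := by
    intro k
    have h2 : Filter.Tendsto (fun t => E t * x₀ k + (1 - E t) / N * S) Filter.atTop
        (nhds (0 * x₀ k + (1 - 0) / N * S)) :=
      ((hE0.mul_const _).add ((((tendsto_const_nhds.sub hE0)).div_const _).mul_const _))
    have h3 : (0 : ℂ) * x₀ k + (1 - 0) / N * S = S / N := by ring
    rw [h3] at h2
    exact h2
  have hratio : (fun t : ℝ => x t i / x t j) = fun t => h t i / h t j := by
    funext t
    rw [hfact t i, hfact t j, mul_div_mul_left _ _ (Complex.exp_ne_zero _)]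
  rw [hratio]
  have hSN : S / N ≠ 0 := div_ne_zero hSne hN0
  have := (hlim i).div (hlim j) hSN
  rw [div_self hSN] at this
  exact this
end

section
/- If x(t) = exp(γ t A) x₀ with A the adjacency matrix of K_N, γ > 0, and S := Σ_j x₀_j ≠ 0, then the normalized order parameter (1/N)|Σ_j x_j(t)/|x_j(t)||, using the phases arg(x_j(t)), converges to 1 as t → ∞. -/
open NormedSpace

attribute [local instance] Matrix.linftyOpNormedRing Matrix.linftyOpNormedAlgebra
  Matrix.linftyOpNormedAddCommGroup Matrix.linftyOpNormedSpace

lemma exp_mulVec_eig {N : ℕ} (M : Matrix (Fin N) (Fin N) ℂ) (v : Fin N → ℂ) (μ : ℂ)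
    (h : M.mulVec v = μ • v) :
    (NormedSpace.exp M).mulVec v = NormedSpace.exp μ • v := by
  have hpow : ∀ n : ℕ, (M ^ n).mulVec v = μ ^ n • v := by
    intro n
    induction n with
    | zero => simp
    | succ n ih =>
      rw [pow_succ', ← Matrix.mulVec_mulVec, ih, Matrix.mulVec_smul, h, smul_smul, ← pow_succ]
  let L : Matrix (Fin N) (Fin N) ℂ →ₗ[ℂ] (Fin N → ℂ) :=
    { toFun := fun B => B.mulVec v
      map_add' := fun B C => Matrix.add_mulVec B C v
      map_smul' := fun c B => Matrix.smul_mulVec c B v }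
  let L' : Matrix (Fin N) (Fin N) ℂ →L[ℂ] (Fin N → ℂ) := LinearMap.toContinuousLinearMap L
  have hL' : ∀ B, L' B = B.mulVec v := fun _ => rfl
  rw [NormedSpace.exp_eq_tsum ℂ, ← hL', L'.map_tsum (NormedSpace.expSeries_summable' M)]
  have : ∀ n : ℕ, L' (((n.factorial : ℂ))⁻¹ • M ^ n) = (((n.factorial : ℂ))⁻¹ * μ ^ n) • v := by
    intro n
    rw [map_smul, hL', hpow, smul_smul]
  simp_rw [this]
  rw [Summable.tsum_smul_const (by simpa [smul_eq_mul] using NormedSpace.expSeries_summable' (𝕂 := ℂ) μ)]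
  congr 1
  rw [NormedSpace.exp_eq_tsum ℂ]
  simp [smul_eq_mul]

theorem stmt_14 (N : ℕ) (hN : 2 ≤ N) (A : Matrix (Fin N) (Fin N) ℂ)
    (hA : ∀ i j : Fin N, A i j = if i = j then 0 else 1)
    (γ : ℝ) (hγ : 0 < γ) (x₀ : Fin N → ℂ)
    (hx₀ : ∀ j, x₀ j ≠ 0) (hS : (∑ j, x₀ j) ≠ 0)
    (x : ℝ → Fin N → ℂ)
    (hx : ∀ t : ℝ, x t = (NormedSpace.exp (((γ : ℂ) * t) • A)).mulVec x₀) :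
    Filter.Tendsto
      (fun t : ℝ =>
        ‖(1 / N : ℂ) * ∑ j, x t j / ((‖x t j‖ : ℝ) : ℂ)‖)
      Filter.atTop (nhds 1) := by
  have hN0 : (N : ℂ) ≠ 0 := Nat.cast_ne_zero.mpr (by omega)
  set S : ℂ := ∑ j, x₀ j with hSdef
  set c : ℂ := S / N with hcdef
  have hc : c ≠ 0 := div_ne_zero hS hN0
  set w : Fin N → ℂ := fun _ => c with hwdef
  set v : Fin N → ℂ := fun j => x₀ j - c with hvdef
  have hAu : ∀ (u : Fin N → ℂ) (i : Fin N), A.mulVec u i = (∑ j, u j) - u i := by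
    intro u i
    simp only [Matrix.mulVec, dotProduct, hA, ite_mul, zero_mul, one_mul]
    have h1 : ∀ j, (if i = j then 0 else u j) = u j - (if i = j then u j else 0) := by
      intro j; split <;> simp
    simp_rw [h1]
    rw [Finset.sum_sub_distrib, Finset.sum_ite_eq]
    simp
  have hsum_v : (∑ j, v j) = 0 := by
    simp only [hvdef, Finset.sum_sub_distrib, Finset.sum_const, Finset.card_univ,
      Fintype.card_fin, ← hSdef, hcdef, nsmul_eq_mul]
    field_simp
    ring
  have hv : A.mulVec v = (-1 : ℂ) • v := by
    funext i
    rw [hAu, hsum_v]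
    simp
  have hw : A.mulVec w = ((N : ℂ) - 1) • w := by
    funext i
    rw [hAu]
    simp only [hwdef, Finset.sum_const, Finset.card_univ, Fintype.card_fin, nsmul_eq_mul,
      Pi.smul_apply, smul_eq_mul]
    ring
  have hxt : ∀ (t : ℝ) (j : Fin N), x t j =
      Complex.exp (-((γ : ℂ) * t)) * (x₀ j - c) +
        Complex.exp (((γ : ℂ) * t) * ((N : ℂ) - 1)) * c := by
    intro t j
    have hx0 : x₀ = v + w := by funext j; simp [hvdef, hwdef]
    have hev : (((γ : ℂ) * t) • A).mulVec v = (((γ : ℂ) * t) * (-1)) • v := by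
      rw [Matrix.smul_mulVec, hv, smul_smul]
    have hew : (((γ : ℂ) * t) • A).mulVec w = (((γ : ℂ) * t) * ((N : ℂ) - 1)) • w := by
      rw [Matrix.smul_mulVec, hw, smul_smul]
    have := hx t
    rw [hx0, Matrix.mulVec_add, exp_mulVec_eig _ _ _ hev, exp_mulVec_eig _ _ _ hew] at this
    have hxj := congrFun this j
    rw [hxj]
    simp only [Pi.add_apply, Pi.smul_apply, smul_eq_mul, hvdef, hwdef]
    rw [← Complex.exp_eq_exp_ℂ]
    ring_nf
  -- factor out the growing real exponential
  set r : ℝ → ℝ := fun t => Real.exp (γ * t * (N - 1)) with hrdef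
  set u : ℝ → Fin N → ℂ := fun t j => c + Complex.exp (-((γ * N * t : ℝ) : ℂ)) * (x₀ j - c)
    with hudef
  have hfac : ∀ (t : ℝ) (j : Fin N), x t j = (r t : ℂ) * u t j := by
    intro t j
    have hr : (r t : ℂ) = Complex.exp (((γ : ℂ) * t) * ((N : ℂ) - 1)) := by
      rw [hrdef, Complex.ofReal_exp]
      congr 1
      push_cast
      ring
    rw [hxt t j, hr, hudef]
    simp only
    have key : Complex.exp (((γ : ℂ) * t) * ((N : ℂ) - 1)) *
        Complex.exp (-((γ * N * t : ℝ) : ℂ)) = Complex.exp (-((γ : ℂ) * t)) := by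
      rw [← Complex.exp_add]
      congr 1
      push_cast
      ring
    rw [mul_add, ← mul_assoc, key]
    ring
  have hratio : ∀ (t : ℝ) (j : Fin N),
      x t j / ((‖(x t j)‖ : ℝ) : ℂ) = u t j / ((‖(u t j)‖ : ℝ) : ℂ) := by
    intro t j
    have hrpos : 0 < r t := Real.exp_pos _
    rw [hfac t j, norm_mul, Complex.norm_of_nonneg hrpos.le]
    push_cast
    rw [mul_div_mul_left _ _ (by exact_mod_cast hrpos.ne' : (r t : ℂ) ≠ 0)]
  have hexp : Filter.Tendsto (fun t : ℝ => Complex.exp (-((γ * N * t : ℝ) : ℂ)))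
      Filter.atTop (nhds 0) := by
    have h0 : Filter.Tendsto (fun t : ℝ => γ * N * t) Filter.atTop Filter.atTop := by
      apply Filter.Tendsto.const_mul_atTop
        (by positivity : (0 : ℝ) < γ * N) Filter.tendsto_id
    have h1 : Filter.Tendsto (fun t : ℝ => Real.exp (-(γ * N * t))) Filter.atTop (nhds 0) :=
      Real.tendsto_exp_atBot.comp (Filter.tendsto_neg_atTop_atBot.comp h0)
    have h2 := (Complex.continuous_ofReal.tendsto 0).comp h1
    rw [Complex.ofReal_zero] at h2
    refine h2.congr fun t => ?_
    simp only [Function.comp_apply, Complex.ofReal_exp, Complex.ofReal_neg]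
  have hulim : ∀ j : Fin N, Filter.Tendsto (fun t => u t j) Filter.atTop (nhds c) := by
    intro j
    have := Filter.Tendsto.add (tendsto_const_nhds (x := c))
      (hexp.mul_const (x₀ j - c))
    simpa [hudef] using this
  have habs : ContinuousAt (fun z : ℂ => z / ((‖z‖ : ℝ) : ℂ)) c := by
    apply ContinuousAt.div continuousAt_id
    · exact (Complex.continuous_ofReal.comp continuous_norm).continuousAt
    · simpa [Complex.ofReal_eq_zero] using norm_ne_zero_iff.mpr hc
  have hjlim : ∀ j : Fin N, Filter.Tendsto (fun t => u t j / ((‖(u t j)‖ : ℝ) : ℂ))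
      Filter.atTop (nhds (c / ((‖c‖ : ℝ) : ℂ))) := by
    intro j
    exact (habs.tendsto).comp (hulim j)
  have hsumlim : Filter.Tendsto (fun t => ∑ j, x t j / ((‖(x t j)‖ : ℝ) : ℂ))
      Filter.atTop (nhds (∑ _j : Fin N, c / ((‖c‖ : ℝ) : ℂ))) := by
    have h := tendsto_finset_sum Finset.univ (fun j (_ : j ∈ Finset.univ) => hjlim j)
    refine h.congr fun t => ?_
    exact Finset.sum_congr rfl fun j _ => (hratio t j).symm
  have hfinal := (continuous_norm.tendsto _).comp
    (hsumlim.const_mul (1 / N : ℂ))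
  have hval : ‖(1 / N : ℂ) * ∑ _j : Fin N, c / ((‖c‖ : ℝ) : ℂ)‖ = 1 := by
    rw [Finset.sum_const, Finset.card_univ, Fintype.card_fin, nsmul_eq_mul]
    rw [show (1 / N : ℂ) * ((N : ℂ) * (c / ((‖c‖ : ℝ) : ℂ)))
        = c / ((‖c‖ : ℝ) : ℂ) by field_simp]
    rw [norm_div, Complex.norm_real, Real.norm_of_nonneg (norm_nonneg c),
      div_self (norm_ne_zero_iff.mpr hc)]
  rw [← hval]
  exact hfinal.congr fun t => rfl
end

section
/- If A is a real matrix with nonnegative entries and x₀ has all components with positive real part, then every component of exp(t A) x₀ has positive real part for all t ≥ 0; in particular x_j(t) ≠ 0, so the phase arg(x_j(t)) is well-defined and lies in (−π/2, π/2). -/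
set_option maxHeartbeats 1000000
open NormedSpace

private lemma pow_entry_nonneg {N : ℕ} {B : Matrix (Fin N) (Fin N) ℝ}
    (hB : ∀ i j, 0 ≤ B i j) (n : ℕ) : ∀ i j, 0 ≤ (B ^ n) i j := by
  induction n with
  | zero =>
    intro i j
    simp only [pow_zero]
    by_cases h : i = j
    · subst h; simp [Matrix.one_apply_eq]
    · simp [Matrix.one_apply_ne h]
  | succ n ih =>
    intro i j
    rw [pow_succ, Matrix.mul_apply]
    exact Finset.sum_nonneg fun l _ => mul_nonneg (ih i l) (hB l j)

private lemma hasSum_exp_entry {N : ℕ} (B : Matrix (Fin N) (Fin N) ℝ) (i k : Fin N) :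
    HasSum (fun n : ℕ => ((n.factorial : ℝ)⁻¹ • B ^ n) i k) (exp B i k) := by
  letI : SeminormedRing (Matrix (Fin N) (Fin N) ℝ) := Matrix.linftyOpSemiNormedRing
  letI : NormedRing (Matrix (Fin N) (Fin N) ℝ) := Matrix.linftyOpNormedRing
  letI : NormedAlgebra ℝ (Matrix (Fin N) (Fin N) ℝ) := Matrix.linftyOpNormedAlgebra
  have hs : HasSum (fun n : ℕ => ((n.factorial : ℝ)⁻¹ • B ^ n)) (exp B) := by
    rw [exp_eq_tsum ℝ]
    exact (expSeries_summable' (𝕂 := ℝ) B).hasSum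
  have hcont : Continuous fun M : Matrix (Fin N) (Fin N) ℝ => M i k :=
    continuous_id.matrix_elem i k
  exact hs.map (AddMonoidHom.mk' (fun M : Matrix (Fin N) (Fin N) ℝ => M i k)
    (fun _ _ => rfl)) hcont

private lemma exp_entry_nonneg {N : ℕ} {B : Matrix (Fin N) (Fin N) ℝ}
    (hB : ∀ i j, 0 ≤ B i j) (i k : Fin N) : 0 ≤ exp B i k := by
  refine hasSum_le (f := fun _ : ℕ => (0:ℝ)) ?_ hasSum_zero (hasSum_exp_entry B i k)
  intro n
  exact mul_nonneg (by positivity) (pow_entry_nonneg hB n i k)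

private lemma one_le_exp_entry_diag {N : ℕ} {B : Matrix (Fin N) (Fin N) ℝ}
    (hB : ∀ i j, 0 ≤ B i j) (j : Fin N) : 1 ≤ exp B j j := by
  have h := le_hasSum (hasSum_exp_entry B j j) 0 ?_
  · simpa using h
  · intro n _
    exact mul_nonneg (by positivity) (pow_entry_nonneg hB n j j)

private lemma exp_map_ofReal {N : ℕ} (B : Matrix (Fin N) (Fin N) ℝ) :
    exp (B.map (Complex.ofReal : ℝ → ℂ)) = (exp B).map (Complex.ofReal : ℝ → ℂ) := by
  letI : SeminormedRing (Matrix (Fin N) (Fin N) ℝ) := Matrix.linftyOpSemiNormedRing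
  letI : NormedRing (Matrix (Fin N) (Fin N) ℝ) := Matrix.linftyOpNormedRing
  letI : NormedAlgebra ℝ (Matrix (Fin N) (Fin N) ℝ) := Matrix.linftyOpNormedAlgebra
  letI : SeminormedRing (Matrix (Fin N) (Fin N) ℂ) := Matrix.linftyOpSemiNormedRing
  letI : NormedRing (Matrix (Fin N) (Fin N) ℂ) := Matrix.linftyOpNormedRing
  letI : NormedAlgebra ℝ (Matrix (Fin N) (Fin N) ℂ) := Matrix.linftyOpNormedAlgebra
  letI : NormedAlgebra ℂ (Matrix (Fin N) (Fin N) ℂ) := Matrix.linftyOpNormedAlgebra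
  have hf : Continuous fun M : Matrix (Fin N) (Fin N) ℝ =>
      M.map (Complex.ofReal : ℝ → ℂ) :=
    continuous_id.matrix_map Complex.continuous_ofReal
  exact (map_exp_of_mem_ball (𝕂 := ℝ) (Complex.ofRealHom.mapMatrix) hf B
    ((expSeries_radius_eq_top ℝ (Matrix (Fin N) (Fin N) ℝ)).symm ▸ edist_lt_top _ _)).symm

theorem stmt_19 (N : ℕ) (A : Matrix (Fin N) (Fin N) ℝ) (hA : ∀ i j, 0 ≤ A i j)
    (x₀ : Fin N → ℂ) (hx₀ : ∀ j, 0 < (x₀ j).re) (t : ℝ) (ht : 0 ≤ t) (j : Fin N) :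
    0 < ((NormedSpace.exp (t • A.map (Complex.ofReal : ℝ → ℂ))).mulVec x₀ j).re ∧
    (NormedSpace.exp (t • A.map (Complex.ofReal : ℝ → ℂ))).mulVec x₀ j ≠ 0 ∧
    Complex.arg ((NormedSpace.exp (t • A.map (Complex.ofReal : ℝ → ℂ))).mulVec x₀ j) ∈
      Set.Ioo (-(Real.pi / 2)) (Real.pi / 2) := by
  set B : Matrix (Fin N) (Fin N) ℝ := t • A with hBdef
  have hB : ∀ i j, 0 ≤ B i j := fun i j => mul_nonneg ht (hA i j)
  have hmap : t • A.map (Complex.ofReal : ℝ → ℂ) = B.map (Complex.ofReal : ℝ → ℂ) := by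
    ext i k
    simp [hBdef, Matrix.smul_apply, Complex.ofReal_mul]
  rw [hmap, exp_map_ofReal]
  have hre : 0 < (((exp B).map (Complex.ofReal : ℝ → ℂ)).mulVec x₀ j).re := by
    rw [Matrix.mulVec]
    simp only [dotProduct, Matrix.map_apply, Complex.re_sum]
    have : ∀ k ∈ Finset.univ, 0 ≤ (((exp B j k : ℂ)) * x₀ k).re := by
      intro k _
      rw [Complex.mul_re]
      simp only [Complex.ofReal_re, Complex.ofReal_im, zero_mul, sub_zero]
      exact mul_nonneg (exp_entry_nonneg hB j k) (hx₀ k).le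
    refine Finset.sum_pos' this ⟨j, Finset.mem_univ j, ?_⟩
    rw [Complex.mul_re]
    simp only [Complex.ofReal_re, Complex.ofReal_im, zero_mul, sub_zero]
    exact mul_pos (lt_of_lt_of_le one_pos (one_le_exp_entry_diag hB j)) (hx₀ j)
  refine ⟨hre, ?_, ?_⟩
  · intro h
    rw [h] at hre
    simp at hre
  · have := Complex.abs_arg_lt_pi_div_two_iff.mpr (Or.inl hre)
    rcases abs_lt.mp this with ⟨h1, h2⟩
    exact ⟨h1, h2⟩
end
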